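/- Let φ: 𝔻 → 𝔻 be holomorphic and suppose the composition operator C_φ on H²₂(𝔻) is complex symmetric with respect to the conjugation J defined by (Jf)(z) = conj(f(conj z)). Then φ(0) = 0 and φ(z) = φ′(0)·z for all z ∈ 𝔻. -/

import Mathlib

open FormalMultilinearSeries


/-- `kfun u v = K_{conj u}(v) = ∑ ((n+1)/(n+2)⁵)(u·v)ⁿ`, where `K_w` is the
reproducing kernel of `H²₂(𝔻)`. -/
noncomputable def kfun (u v : ℂ) : ℂ :=
  ∑' n : ℕ, (((n : ℂ) + 1) / ((n : ℂ) + 2) ^ 5) * (u * v) ^ n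

noncomputable def cseq (n : ℕ) : ℂ := ((n : ℂ) + 1) / ((n : ℂ) + 2) ^ 5

noncomputable def gfun (t : ℂ) : ℂ := ∑' n : ℕ, cseq n * t ^ n

lemma cseq_norm_le (n : ℕ) : ‖cseq n‖ ≤ 1 := by
  have h1 : ‖(n : ℂ) + 1‖ = (n : ℝ) + 1 := by
    rw [show ((n : ℂ) + 1) = ((n + 1 : ℕ) : ℂ) by push_cast; ring, Complex.norm_natCast]
    push_cast; ring
  have h2 : ‖(n : ℂ) + 2‖ = (n : ℝ) + 2 := by
    rw [show ((n : ℂ) + 2) = ((n + 2 : ℕ) : ℂ) by push_cast; ring, Complex.norm_natCast]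
    push_cast; ring
  rw [cseq, norm_div, norm_pow, h1, h2]
  rw [div_le_one (by positivity)]
  nlinarith [pow_le_pow_right₀ (by linarith [Nat.cast_nonneg (α := ℝ) n] : (1:ℝ) ≤ (n:ℝ)+2) (by norm_num : 1 ≤ 5), Nat.cast_nonneg (α := ℝ) n]

lemma gfun_hasFPowerSeries :
    HasFPowerSeriesOnBall gfun (ofScalars ℂ cseq) 0 1 := by
  constructor
  · apply FormalMultilinearSeries.le_radius_of_bound _ 1
    intro n
    simp only [NNReal.coe_one, one_pow, mul_one]
    rw [FormalMultilinearSeries.ofScalars]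
    calc ‖cseq n • ContinuousMultilinearMap.mkPiAlgebraFin ℂ n ℂ‖
        ≤ ‖cseq n‖ * ‖ContinuousMultilinearMap.mkPiAlgebraFin ℂ n ℂ‖ := ContinuousMultilinearMap.opNorm_smul_le _ _
      _ ≤ 1 * 1 := by
          apply mul_le_mul (cseq_norm_le n) ?_ (norm_nonneg _) zero_le_one
          rw [ContinuousMultilinearMap.norm_mkPiAlgebraFin]
      _ = 1 := one_mul 1
  · norm_num
  · intro y hy
    rw [EMetric.mem_ball, edist_zero_right, enorm_eq_nnnorm, ← ENNReal.coe_one,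
      ENNReal.coe_lt_coe, ← NNReal.coe_lt_coe, coe_nnnorm, NNReal.coe_one] at hy
    have hsum : Summable fun n : ℕ => cseq n * y ^ n := by
      apply Summable.of_norm_bounded (summable_geometric_of_lt_one (norm_nonneg y) hy)
      intro n
      rw [norm_mul, norm_pow]
      exact mul_le_of_le_one_left (by positivity) (cseq_norm_le n)
    have : HasSum (fun n : ℕ => cseq n * y ^ n) (gfun (0 + y)) := by
      rw [zero_add, gfun]; exact hsum.hasSum
    have hfun : (fun n : ℕ => (ofScalars ℂ cseq n) fun _ => y) = fun n => cseq n * y ^ n := by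
      funext n
      rw [FormalMultilinearSeries.ofScalars_apply_eq, smul_eq_mul]
    rw [hfun]
    exact this

lemma gfun_coeff1 : ((ofScalars ℂ cseq 1) fun _ => (1 : ℂ)) = cseq 1 := by
  rw [FormalMultilinearSeries.ofScalars_apply_eq]
  simp

lemma cseq_one_ne : cseq 1 ≠ 0 := by
  rw [cseq]; norm_num


/-- If `φ : 𝔻 → 𝔻` is holomorphic and `C_φ` on `H²₂(𝔻)` is complex symmetric with
the conjugation `J`, `(Jf)(z) = conj(f(conj z))` — equivalently
`K_{conj w}(φ(z)) = K_{conj(φ(w))}(z)` for all `w, z ∈ 𝔻` — then `φ(0) = 0` and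
`φ(z) = φ′(0)·z` on `𝔻`. -/
theorem stmt16 (φ : ℂ → ℂ)
    (hmap : Set.MapsTo φ (Metric.ball (0 : ℂ) 1) (Metric.ball (0 : ℂ) 1))
    (hdiff : DifferentiableOn ℂ φ (Metric.ball (0 : ℂ) 1))
    (hsym : ∀ z ∈ Metric.ball (0 : ℂ) 1, ∀ w ∈ Metric.ball (0 : ℂ) 1,
      kfun w (φ z) = kfun (φ w) z) :
    φ 0 = 0 ∧ ∀ z ∈ Metric.ball (0 : ℂ) 1, φ z = deriv φ 0 * z := by
  have h01 : (0 : ℂ) ∈ Metric.ball (0 : ℂ) 1 := by norm_num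
  have hkg : ∀ u v : ℂ, kfun u v = gfun (u * v) := fun u v => rfl
  have hp : HasFPowerSeriesAt gfun (ofScalars ℂ cseq) 0 :=
    gfun_hasFPowerSeries.hasFPowerSeriesAt
  have hgd : HasDerivAt gfun (cseq 1) 0 := by
    have h := hp.hasStrictDerivAt.hasDerivAt
    rwa [gfun_coeff1] at h
  -- Step 1 : φ 0 = 0
  have hφ0 : φ 0 = 0 := by
    have heq : (fun z => gfun (φ 0 * z)) =ᶠ[nhds (0:ℂ)] (fun _ => gfun 0) := by
      filter_upwards [Metric.ball_mem_nhds (0:ℂ) one_pos] with z hz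
      have := hsym z hz 0 h01
      rw [hkg, hkg, zero_mul] at this
      exact this.symm
    have hu : HasDerivAt (fun z : ℂ => φ 0 * z) (φ 0) 0 := by
      simpa using (hasDerivAt_id (0:ℂ)).const_mul (φ 0)
    have hcomp : HasDerivAt (fun z => gfun (φ 0 * z)) (cseq 1 * φ 0) 0 := by
      have hg' : HasDerivAt gfun (cseq 1) ((fun z : ℂ => φ 0 * z) 0) := by
        simpa using hgd
      exact hg'.comp 0 hu
    have hconst : HasDerivAt (fun z => gfun (φ 0 * z)) 0 0 :=
      (hasDerivAt_const (0:ℂ) (gfun 0)).congr_of_eventuallyEq heq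
    have := hcomp.unique hconst
    exact (mul_eq_zero.mp this).resolve_left cseq_one_ne
  -- Step 2 : local injectivity of gfun near 0
  have hstrict : HasStrictDerivAt gfun (cseq 1) 0 := by
    have h := hp.hasStrictDerivAt
    rwa [gfun_coeff1] at h
  set e := hstrict.hasStrictFDerivAt_equiv cseq_one_ne with he
  set H := e.toOpenPartialHomeomorph gfun with hH
  have hHg : ⇑H = gfun := e.toOpenPartialHomeomorph_coe
  have hinj : Set.InjOn gfun H.source := hHg ▸ H.injOn
  have h0src : (0:ℂ) ∈ H.source := e.mem_toOpenPartialHomeomorph_source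
  obtain ⟨δ, hδ, hball⟩ := Metric.isOpen_iff.mp H.open_source 0 h0src
  -- Step 3 : continuity of φ at 0
  have hcont : ContinuousAt φ 0 := by
    exact (hdiff.differentiableAt (Metric.isOpen_ball.mem_nhds h01)).continuousAt
  obtain ⟨ε, hε, hεs⟩ := Metric.continuousAt_iff.mp hcont δ hδ
  refine ⟨hφ0, fun z hz => ?_⟩
  set r := min ε (min δ 1) with hr
  have hrpos : 0 < r := lt_min hε (lt_min hδ one_pos)
  have key : ∀ w : ℂ, ‖w‖ < r → w * φ z = φ w * z := by
    intro w hw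
    have hw1 : w ∈ Metric.ball (0:ℂ) 1 := by
      rw [Metric.mem_ball, dist_zero_right]
      exact hw.trans_le ((min_le_right _ _).trans (min_le_right _ _))
    have hwδ : ‖w‖ < δ := hw.trans_le ((min_le_right _ _).trans (min_le_left _ _))
    have hφz : ‖φ z‖ < 1 := by
      have := hmap hz; rwa [Metric.mem_ball, dist_zero_right] at this
    have hφw : ‖φ w‖ < δ := by
      have hd : dist w 0 < ε := by
        rw [dist_zero_right]; exact hw.trans_le (min_le_left _ _)
      have := hεs hd
      rwa [hφ0, dist_zero_right] at this
    have hz1 : ‖z‖ < 1 := by rwa [Metric.mem_ball, dist_zero_right] at hz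
    have m1 : w * φ z ∈ Metric.ball (0:ℂ) δ := by
      rw [Metric.mem_ball, dist_zero_right, norm_mul]
      calc ‖w‖ * ‖φ z‖ ≤ ‖w‖ * 1 :=
            mul_le_mul_of_nonneg_left hφz.le (norm_nonneg _)
        _ = ‖w‖ := mul_one _
        _ < δ := hwδ
    have m2 : φ w * z ∈ Metric.ball (0:ℂ) δ := by
      rw [Metric.mem_ball, dist_zero_right, norm_mul]
      calc ‖φ w‖ * ‖z‖ ≤ ‖φ w‖ * 1 :=
            mul_le_mul_of_nonneg_left hz1.le (norm_nonneg _)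
        _ = ‖φ w‖ := mul_one _
        _ < δ := hφw
    have := hsym z hz w hw1
    rw [hkg, hkg] at this
    exact hinj (hball m1) (hball m2) this
  -- Step 4 : differentiate in w at 0
  have heq2 : (fun w : ℂ => w * φ z) =ᶠ[nhds (0:ℂ)] (fun w => φ w * z) := by
    filter_upwards [Metric.ball_mem_nhds (0:ℂ) hrpos] with w hw
    exact key w (by rwa [Metric.mem_ball, dist_zero_right] at hw)
  have h1 : HasDerivAt (fun w : ℂ => w * φ z) (φ z) 0 := by
    simpa using (hasDerivAt_id (0:ℂ)).mul_const (φ z)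
  have h2 : HasDerivAt (fun w : ℂ => φ w * z) (deriv φ 0 * z) 0 :=
    ((hdiff.differentiableAt (Metric.isOpen_ball.mem_nhds h01)).hasDerivAt).mul_const z
  have h2' : HasDerivAt (fun w : ℂ => w * φ z) (deriv φ 0 * z) 0 :=
    h2.congr_of_eventuallyEq heq2
  exact h1.unique h2'
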